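/- Let v_1, …, v_n be real numbers, α ∈ (0,1), and q = Quantile(α; {v_1, …, v_n}). If w_1, …, w_n ∈ ℝ ∪ {+∞} satisfy w_i = v_i for every index i with v_i ≤ q, and w_i > q for every index i with v_i > q, then Quantile(α; {w_1, …, w_n}) = q. In words, the α-quantile of a finite sample is unchanged when all sample points strictly above the quantile are remapped to arbitrary values strictly above it. -/

import Mathlib

lemma countP_le_of_not_get {α : Type*} [LinearOrder α] {L : List α}
    (hs : L.Pairwise (· ≤ ·)) {k : ℕ} (hk : k < L.length) {p : α → Prop} [DecidablePred p]
    (hmono : ∀ x y, x ≤ y → p y → p x)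
    (ha : ¬ p (L.get ⟨k, hk⟩)) : L.countP (fun x => decide (p x)) ≤ k := by
  have hsplit : L.countP (fun x => decide (p x)) =
      (L.take k).countP (fun x => decide (p x)) + (L.drop k).countP (fun x => decide (p x)) := by
    rw [← List.countP_append, List.take_append_drop]
  have h1 : (L.take k).countP (fun x => decide (p x)) ≤ k :=
    le_trans List.countP_le_length (by simp)
  have h2 : (L.drop k).countP (fun x => decide (p x)) = 0 := by
    rw [List.countP_eq_zero]
    intro x hx
    simp only [decide_eq_true_eq]
    obtain ⟨i, hi, rfl⟩ := List.mem_iff_getElem.mp hx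
    rw [List.getElem_drop]
    intro hpx
    have hle : L.get ⟨k, hk⟩ ≤ L.get ⟨k + i, by simpa [Nat.lt_sub_iff_add_lt'] using hi⟩ :=
      hs.rel_get_of_le (by simp)
    exact ha (hmono _ _ hle hpx)
  omega

lemma lt_countP_of_get {α : Type*} [LinearOrder α] {L : List α}
    (hs : L.Pairwise (· ≤ ·)) {k : ℕ} (hk : k < L.length) {p : α → Prop} [DecidablePred p]
    (hmono : ∀ x y, x ≤ y → p y → p x)
    (ha : p (L.get ⟨k, hk⟩)) : k < L.countP (fun x => decide (p x)) := by
  have hsplit : L.countP (fun x => decide (p x)) =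
      (L.take (k+1)).countP (fun x => decide (p x)) + (L.drop (k+1)).countP (fun x => decide (p x)) := by
    rw [← List.countP_append, List.take_append_drop]
  have htl : (L.take (k+1)).length = k + 1 := by
    rw [List.length_take]; omega
  have h1 : (L.take (k+1)).countP (fun x => decide (p x)) = (L.take (k+1)).length := by
    rw [List.countP_eq_length]
    intro x hx
    simp only [decide_eq_true_eq]
    obtain ⟨i, hi, rfl⟩ := List.mem_iff_getElem.mp hx
    rw [List.getElem_take]
    have hik : i ≤ k := by rw [htl] at hi; omega
    have hle : L.get ⟨i, by omega⟩ ≤ L.get ⟨k, hk⟩ := hs.rel_get_of_le (by simpa)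
    exact hmono _ _ hle ha
  omega


open MeasureTheory

/-- The empirical `α`-quantile of a finite multiset `S` of values in `ℝ ∪ {+∞}`:
the `⌈α · |S|⌉`-th smallest element of `S`, counted with multiplicity. -/
noncomputable def empQuantile (α : ℝ) (S : Multiset (WithTop ℝ)) : WithTop ℝ :=
  (S.sort (· ≤ ·)).getD (⌈α * (S.card : ℝ)⌉.toNat - 1) ⊤

/-- The `α`-quantile of a finite sample of reals is unchanged when every sample point
strictly above the quantile is remapped to an arbitrary value (in `ℝ ∪ {+∞}`) strictly
above it. -/
theorem quantile_remap_above
    {n : ℕ} (v : Fin n → ℝ) (w : Fin n → WithTop ℝ)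
    (α : ℝ) (hα : α ∈ Set.Ioo (0 : ℝ) 1)
    (q : WithTop ℝ)
    (hq : q = empQuantile α
      ((Finset.univ : Finset (Fin n)).val.map fun i => ((v i : ℝ) : WithTop ℝ)))
    (hle : ∀ i, ((v i : ℝ) : WithTop ℝ) ≤ q → w i = ((v i : ℝ) : WithTop ℝ))
    (hgt : ∀ i, q < ((v i : ℝ) : WithTop ℝ) → q < w i) :
    empQuantile α ((Finset.univ : Finset (Fin n)).val.map w) = q := by
  classical
  set Sv : Multiset (WithTop ℝ) :=
    (Finset.univ : Finset (Fin n)).val.map (fun i => ((v i : ℝ) : WithTop ℝ)) with hSv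
  set Sw : Multiset (WithTop ℝ) := (Finset.univ : Finset (Fin n)).val.map w with hSw
  by_cases hall : ∀ i, ((v i : ℝ) : WithTop ℝ) ≤ q
  · have hWV : Sw = Sv := by
      rw [hSw, hSv]
      exact Multiset.map_congr rfl (fun i _ => hle i (hall i))
    rw [hWV, ← hq]
  · have hn : 0 < n := by
      by_contra h
      exact hall (fun i => absurd i.2 (by omega))
    have hcv : Multiset.card Sv = n := by simp [hSv]
    have hcw : Multiset.card Sw = n := by simp [hSw]
    set k : ℕ := (⌈α * (n : ℝ)⌉).toNat - 1 with hkdef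
    have hk : k < n := by
      have h1 : (⌈α * (n : ℝ)⌉ : ℤ) ≤ n := by
        apply Int.ceil_le.mpr
        push_cast
        nlinarith [hα.2, hα.1, (by exact_mod_cast hn : (0:ℝ) < (n:ℝ))]
      have h2 : (⌈α * (n : ℝ)⌉).toNat ≤ n := by omega
      omega
    set Lv : List (WithTop ℝ) := Sv.sort (· ≤ ·) with hLv
    set Lw : List (WithTop ℝ) := Sw.sort (· ≤ ·) with hLw
    have hlv : Lv.length = n := by rw [hLv, Multiset.length_sort, hcv]
    have hlw : Lw.length = n := by rw [hLw, Multiset.length_sort, hcw]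
    have hsv : Lv.Pairwise (· ≤ ·) := Multiset.pairwise_sort _ _
    have hsw : Lw.Pairwise (· ≤ ·) := Multiset.pairwise_sort _ _
    have hkv : k < Lv.length := by omega
    have hkw : k < Lw.length := by omega
    have hqget : q = Lv.get ⟨k, hkv⟩ := by
      rw [hq]
      unfold empQuantile
      rw [hcv]
      show Lv.getD k ⊤ = Lv.get ⟨k, hkv⟩
      rw [List.getD_eq_getElem _ _ hkv]
      rfl
    -- count transfer
    have hcount : ∀ (p : WithTop ℝ → Prop) [DecidablePred p],
        (∀ i, p (w i) ↔ p ((v i : ℝ) : WithTop ℝ)) →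
        Lw.countP (fun x => decide (p x)) = Lv.countP (fun x => decide (p x)) := by
      intro p _ hp
      have h1 : Multiset.countP p Sw = Multiset.countP p Sv := by
        rw [hSw, hSv, Multiset.countP_map, Multiset.countP_map]
        congr 1
        exact Multiset.filter_congr (fun i _ => hp i)
      have h2 : Multiset.countP p Sw = Lw.countP (fun x => decide (p x)) := by
        conv_lhs => rw [← Multiset.sort_eq Sw (· ≤ ·), ← hLw]
        exact Multiset.coe_countP _ _
      have h3 : Multiset.countP p Sv = Lv.countP (fun x => decide (p x)) := by
        conv_lhs => rw [← Multiset.sort_eq Sv (· ≤ ·), ← hLv]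
        exact Multiset.coe_countP _ _
      rw [← h2, ← h3, h1]
    have hple : ∀ i, (w i ≤ q) ↔ (((v i : ℝ) : WithTop ℝ) ≤ q) := by
      intro i
      rcases le_or_gt ((v i : ℝ) : WithTop ℝ) q with h | h
      · rw [hle i h]
      · simp only [not_le.mpr h, iff_false, not_le]
        exact hgt i h
    have hplt : ∀ i, (w i < q) ↔ (((v i : ℝ) : WithTop ℝ) < q) := by
      intro i
      rcases le_or_gt ((v i : ℝ) : WithTop ℝ) q with h | h
      · rw [hle i h]
      · simp only [not_lt.mpr h.le, iff_false, not_lt]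
        exact (hgt i h).le
    have mle : ∀ x y : WithTop ℝ, x ≤ y → y ≤ q → x ≤ q := fun _ _ h1 h2 => le_trans h1 h2
    have mlt : ∀ x y : WithTop ℝ, x ≤ y → y < q → x < q := fun _ _ h1 h2 => lt_of_le_of_lt h1 h2
    have c1 : k < Lv.countP (fun x => decide (x ≤ q)) :=
      lt_countP_of_get hsv hkv mle (le_of_eq hqget.symm)
    have c2 : Lv.countP (fun x => decide (x < q)) ≤ k :=
      countP_le_of_not_get hsv hkv mlt (by rw [← hqget]; exact lt_irrefl q)
    have c1' : k < Lw.countP (fun x => decide (x ≤ q)) := by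
      rw [hcount (fun x => x ≤ q) hple]; exact c1
    have c2' : Lw.countP (fun x => decide (x < q)) ≤ k := by
      rw [hcount (fun x => x < q) hplt]; exact c2
    have hgoal : Lw.get ⟨k, hkw⟩ = q := by
      refine le_antisymm ?_ ?_
      · by_contra h
        push_neg at h
        exact absurd (countP_le_of_not_get hsw hkw mle (not_le.mpr h)) (by omega)
      · by_contra h
        push_neg at h
        exact absurd (lt_countP_of_get hsw hkw mlt h) (by omega)
    unfold empQuantile
    rw [hcw]
    show Lw.getD k ⊤ = q
    rw [List.getD_eq_getElem _ _ hkw]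
    exact hgoal
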